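/- Let F be a field of characteristic p > 0 and K/F a finite extension. Let e be the largest integer such that p^e divides [K:F]. For i ≥ 0, let F^(i) = { a^(1/p^i) : a ∈ F } (inside a fixed algebraic closure). Then for every e' ≥ e, every element b ∈ K is separable over F^(e'). -/
import Mathlib

open Polynomial

set_option maxHeartbeats 1000000
set_option synthInstance.maxHeartbeats 400000

/-- Let `F` be a field of characteristic `p > 0` and `K/F` a finite
extension inside a fixed algebraic closure `Ω`. Let `e` be the largest integer such that
`p ^ e` divides `[K : F]`. For `i ≥ 0`, `F^(i)` is the subfield of `Ω` consisting of the
`p^i`-th roots of elements of `F` (i.e. the preimage of `F` under the `i`-th iterate of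
Frobenius). Then for every `e' ≥ e`, every element `b ∈ K` is separable over `F^(e')`. -/
theorem separable_over_pth_root_field
    (p : ℕ) (hp : p.Prime)
    (F : Type*) [Field F] [CharP F p]
    (Ω : Type*) [Field Ω] [Algebra F Ω] [IsAlgClosure F Ω] [CharP Ω p] [ExpChar Ω p]
    (K : IntermediateField F Ω) [FiniteDimensional F K]
    (e : ℕ)
    (he : p ^ e ∣ Module.finrank F K)
    (he' : ¬ p ^ (e + 1) ∣ Module.finrank F K)
    (e' : ℕ) (hee' : e ≤ e')
    (b : Ω) (hb : b ∈ K) :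
    (minpoly (↥(Subfield.comap (iterateFrobenius Ω p e')
        ((algebraMap F Ω).fieldRange))) b).Separable := by
  haveI : IsAlgClosed Ω := IsAlgClosure.isAlgClosed F
  haveI : PerfectField Ω := IsAlgClosed.perfectField Ω
  haveI : CharP ↥K p := charP_of_injective_algebraMap (algebraMap F ↥K).injective p
  haveI : ExpChar ↥K p := ExpChar.prime hp
  set S := separableClosure F ↥K with hS
  haveI : CharP ↥S p := charP_of_injective_algebraMap (algebraMap F ↥S).injective p
  haveI : ExpChar ↥S p := ExpChar.prime hp
  set b' : ↥K := ⟨b, hb⟩ with hb'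
  -- Step 1: `b' ^ p ^ e'` lies in the separable closure `S`.
  obtain ⟨n, y, hmin⟩ := IsPurelyInseparable.minpoly_eq_X_pow_sub_C ↥S p b'
  have hpow : b' ^ p ^ n ∈ S := by
    have h0 := minpoly.aeval ↥S b'
    rw [hmin] at h0
    simp only [map_sub, map_pow, aeval_X, aeval_C, sub_eq_zero] at h0
    rw [h0]
    exact y.2
  have hn : n ≤ e' := by
    have hdeg : (minpoly ↥S b').natDegree = p ^ n := by
      rw [hmin, natDegree_X_pow_sub_C]
    have hdvd : p ^ n ∣ Module.finrank ↥S ↥K := by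
      rw [← hdeg]
      exact minpoly.degree_dvd (Algebra.IsIntegral.isIntegral b')
    have hdvd2 : p ^ n ∣ Module.finrank F ↥K := by
      exact hdvd.trans (dvd_of_mul_left_eq _ (Module.finrank_mul_finrank F ↥S ↥K))
    by_contra hlt
    push_neg at hlt
    exact he' ((pow_dvd_pow p (by omega : e + 1 ≤ n)).trans hdvd2)
  have hpowS : b' ^ p ^ e' ∈ S := by
    have : b' ^ p ^ e' = (b' ^ p ^ n) ^ p ^ (e' - n) := by
      rw [← pow_mul, ← pow_add, Nat.add_sub_cancel' hn]
    rw [this]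
    exact pow_mem hpow _
  -- Step 2: hence `b ^ p ^ e'` is separable over `F` as an element of `Ω`.
  have hsepK : IsSeparable F (b' ^ p ^ e') :=
    mem_separableClosure_iff.mp hpowS
  have hsepΩ : (minpoly F (b ^ p ^ e')).Separable := by
    have := minpoly.algHom_eq K.val (Subtype.val_injective) (b' ^ p ^ e')
    have hval : K.val (b' ^ p ^ e') = b ^ p ^ e' := by
      simp [hb']
    rw [hval] at this
    rw [this]
    exact hsepK
  -- Step 3: transfer along the inverse Frobenius.
  set L := Subfield.comap (iterateFrobenius Ω p e') ((algebraMap F Ω).fieldRange) with hL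
  set ψ : F →+* ↥L := RingHom.codRestrict
    (((iterateFrobeniusEquiv Ω p e').symm : Ω →+* Ω).comp (algebraMap F Ω)) L
    (fun c => by
      have h : iterateFrobenius Ω p e'
          ((iterateFrobeniusEquiv Ω p e').symm (algebraMap F Ω c)) = algebraMap F Ω c := by
        rw [← coe_iterateFrobeniusEquiv]
        exact (iterateFrobeniusEquiv Ω p e').apply_symm_apply _
      exact Subfield.mem_comap.mpr (h ▸ ⟨c, rfl⟩)) with hψ
  set g := minpoly F (b ^ p ^ e') with hg
  have hcomp : (algebraMap ↥L Ω).comp ψ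
      = (((iterateFrobeniusEquiv Ω p e').symm : Ω →+* Ω).comp (algebraMap F Ω)) := rfl
  have haeval : Polynomial.aeval b (g.map ψ) = 0 := by
    have h1 : Polynomial.aeval b (g.map ψ)
        = eval₂ (((iterateFrobeniusEquiv Ω p e').symm : Ω →+* Ω).comp (algebraMap F Ω)) b g := by
      rw [aeval_def, eval₂_map, hcomp]
    have h2 : iterateFrobenius Ω p e'
        (eval₂ (((iterateFrobeniusEquiv Ω p e').symm : Ω →+* Ω).comp (algebraMap F Ω)) b g)
        = eval₂ (algebraMap F Ω) (b ^ p ^ e') g := by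
      rw [hom_eval₂]
      congr 1
      ext c
      simp only [RingHom.coe_comp, Function.comp_apply, RingEquiv.coe_toRingHom]
      rw [← coe_iterateFrobeniusEquiv, RingEquiv.apply_symm_apply]
    have h3 : eval₂ (algebraMap F Ω) (b ^ p ^ e') g = 0 := minpoly.aeval F _
    rw [h1]
    have h4 := h2.trans h3
    rwa [iterateFrobenius_def, pow_eq_zero_iff (pow_ne_zero _ hp.ne_zero)] at h4
  have hdvd : minpoly ↥L b ∣ g.map ψ := minpoly.dvd ↥L b haeval
  exact (hsepΩ.map (f := ψ)).of_dvd hdvd
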